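/- Let $F$, $F_1$, $F_2$ be distribution functions on $[0,\infty)$ with $F$ subexponential. If $\bar F_i(t)/\bar F(t)\to c_i$ as $t\to\infty$ for some constants $c_i\ge 0$, $i=1,2$, then the convolution satisfies $\overline{F_1*F_2}(t)/\bar F(t)\to c_1+c_2$ as $t\to\infty$. -/

import Mathlib

open MeasureTheory Filter Set Topology
open scoped ENNReal

/-- The convolution of two measures on `ℝ`: the law of the sum of independent random
variables with the given laws. -/
noncomputable def mconv (μ ν : Measure ℝ) : Measure ℝ :=
  (μ.prod ν).map (fun p => p.1 + p.2)

instance mconv.prob (μ ν : Measure ℝ) [IsProbabilityMeasure μ] [IsProbabilityMeasure ν] :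
    IsProbabilityMeasure (mconv μ ν) :=
  Measure.isProbabilityMeasure_map (measurable_fst.add measurable_snd).aemeasurable

lemma mconv_comm (μ ν : Measure ℝ) [SFinite μ] [SFinite ν] : mconv μ ν = mconv ν μ := by
  rw [mconv, mconv, ← Measure.prod_swap, Measure.map_map (show Measurable (fun p : ℝ × ℝ => p.1 + p.2) from measurable_fst.add measurable_snd)
    measurable_swap]
  simp [Function.comp_def, add_comm]

lemma tail_meas (κ : Measure ℝ) (t : ℝ) : Measurable (fun x => κ (Ioi (t - x))) := by
  have h1 : Antitone (fun s : ℝ => κ (Ioi s)) := fun a b hab =>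
    measure_mono (Ioi_subset_Ioi hab)
  exact (h1.measurable).comp (measurable_const.sub measurable_id)

lemma mconv_tail (μ κ : Measure ℝ) [SFinite κ] (t : ℝ) :
    mconv μ κ (Ioi t) = ∫⁻ x, κ (Ioi (t - x)) ∂μ := by
  rw [mconv, Measure.map_apply (show Measurable (fun p : ℝ × ℝ => p.1 + p.2) from measurable_fst.add measurable_snd) measurableSet_Ioi,
    Measure.prod_apply ((show Measurable (fun p : ℝ × ℝ => p.1 + p.2) from measurable_fst.add measurable_snd) measurableSet_Ioi)]
  congr 1
  ext x
  congr 1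
  ext y
  simp [mem_Ioi, sub_lt_iff_lt_add']

lemma tail_one (κ : Measure ℝ) [IsProbabilityMeasure κ] (hκ : κ (Iio 0) = 0) {s : ℝ}
    (hs : s < 0) : κ (Ioi s) = 1 := by
  refine le_antisymm prob_le_one ?_
  have h1 : κ (Ici 0) = 1 := by
    have := measure_add_measure_compl (μ := κ) (measurableSet_Iio (a := (0:ℝ)))
    simp only [hκ, zero_add, compl_Iio] at this
    simpa using this
  calc (1:ℝ≥0∞) = κ (Ici 0) := h1.symm
    _ ≤ κ (Ioi s) := measure_mono fun x hx => lt_of_lt_of_le hs hx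

lemma restrict_nonneg (μ : Measure ℝ) (hμ : μ (Iio 0) = 0) : μ.restrict (Ici 0) = μ := by
  refine Measure.restrict_eq_self_of_ae_mem ?_
  rw [ae_iff]
  have : {x : ℝ | ¬ x ∈ Ici (0:ℝ)} = Iio 0 := by ext x; simp [mem_Ici, not_le]
  rwa [this]

lemma mconv_tail_split (μ κ : Measure ℝ) [IsProbabilityMeasure κ] [SFinite κ]
    (hμ : μ (Iio 0) = 0) (hκ : κ (Iio 0) = 0) {t : ℝ} (ht : 0 ≤ t) :
    mconv μ κ (Ioi t) = (∫⁻ x in Icc 0 t, κ (Ioi (t - x)) ∂μ) + μ (Ioi t) := by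
  rw [mconv_tail]
  have h0 : ∫⁻ x, κ (Ioi (t - x)) ∂μ = ∫⁻ x in Ici 0, κ (Ioi (t - x)) ∂μ := by
    rw [restrict_nonneg μ hμ]
  rw [h0, ← Set.Icc_union_Ioi_eq_Ici ht,
    lintegral_union measurableSet_Ioi ((Set.Iic_disjoint_Ioi le_rfl).mono Icc_subset_Iic_self le_rfl)]
  congr 1
  rw [← setLIntegral_one]
  refine setLIntegral_congr_fun measurableSet_Ioi (fun x hx => ?_)
  exact tail_one κ hκ (by simp only [mem_Ioi] at hx; linarith)

lemma nonneg_one (μ : Measure ℝ) [IsProbabilityMeasure μ] (hμ : μ (Iio 0) = 0) :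
    μ (Ici 0) = 1 := by
  have := measure_add_measure_compl (μ := μ) (measurableSet_Iio (a := (0:ℝ)))
  simp only [hμ, zero_add, compl_Iio] at this
  simpa using this

lemma icc_add_ioi (μ : Measure ℝ) [IsProbabilityMeasure μ] (hμ : μ (Iio 0) = 0) {t : ℝ}
    (ht : 0 ≤ t) : μ (Icc 0 t) + μ (Ioi t) = 1 := by
  rw [← measure_union ((Iic_disjoint_Ioi le_rfl).mono Icc_subset_Iic_self le_rfl)
    measurableSet_Ioi, Set.Icc_union_Ioi_eq_Ici ht, nonneg_one μ hμ]

lemma mconv_lower (μ κ : Measure ℝ) [IsProbabilityMeasure μ] [IsProbabilityMeasure κ]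
    (hμ : μ (Iio 0) = 0) (hκ : κ (Iio 0) = 0) {t : ℝ} (ht : 0 ≤ t) :
    μ (Ioi t) + κ (Ioi t) * μ (Icc 0 t) ≤ mconv μ κ (Ioi t) := by
  rw [mconv_tail_split μ κ hμ hκ ht, add_comm (∫⁻ x in Icc 0 t, κ (Ioi (t - x)) ∂μ)]
  refine add_le_add_right ?_ _
  calc κ (Ioi t) * μ (Icc 0 t) = ∫⁻ _ in Icc 0 t, κ (Ioi t) ∂μ := (setLIntegral_const _ _).symm
    _ ≤ ∫⁻ x in Icc 0 t, κ (Ioi (t - x)) ∂μ := by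
        refine setLIntegral_mono (tail_meas κ t) fun x hx => ?_
        exact measure_mono (Ioi_subset_Ioi (by linarith [hx.1]))

lemma mconv_upper (μ κ ρ : Measure ℝ) [IsProbabilityMeasure μ] [IsProbabilityMeasure κ]
    [IsProbabilityMeasure ρ] (hμ : μ (Iio 0) = 0) (hκ : κ (Iio 0) = 0) (hρ : ρ (Iio 0) = 0)
    (C : ℝ≥0∞) {T t : ℝ} (hT : 0 ≤ T) (ht : T ≤ t)
    (hcomp : ∀ s, T ≤ s → κ (Ioi s) ≤ C * ρ (Ioi s)) :
    mconv μ κ (Ioi t) + C * μ (Ioi t) ≤ C * mconv μ ρ (Ioi t) + μ (Ioi (t - T)) := by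
  have ht0 : 0 ≤ t := hT.trans ht
  rw [mconv_tail_split μ κ hμ hκ ht0, mconv_tail_split μ ρ hμ hρ ht0]
  have hsplit : Icc 0 t = Icc 0 (t - T) ∪ Ioc (t - T) t :=
    (Set.Icc_union_Ioc_eq_Icc (sub_nonneg.2 ht) (sub_le_self t hT)).symm
  rw [hsplit, lintegral_union measurableSet_Ioc
    ((Iic_disjoint_Ioc le_rfl).mono Icc_subset_Iic_self le_rfl)]
  have hA : ∫⁻ x in Icc 0 (t - T), κ (Ioi (t - x)) ∂μ
      ≤ C * ∫⁻ x in Icc 0 (t - T) ∪ Ioc (t - T) t, ρ (Ioi (t - x)) ∂μ := by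
    calc ∫⁻ x in Icc 0 (t - T), κ (Ioi (t - x)) ∂μ
        ≤ ∫⁻ x in Icc 0 (t - T), C * ρ (Ioi (t - x)) ∂μ := by
          refine setLIntegral_mono (measurable_const.mul (tail_meas ρ t)) fun x hx => ?_
          exact hcomp _ (by linarith [hx.2])
      _ = C * ∫⁻ x in Icc 0 (t - T), ρ (Ioi (t - x)) ∂μ := lintegral_const_mul _ (tail_meas ρ t)
      _ ≤ C * ∫⁻ x in Icc 0 (t - T) ∪ Ioc (t - T) t, ρ (Ioi (t - x)) ∂μ :=
          mul_le_mul_right (lintegral_mono_set subset_union_left) _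
  have hB : (∫⁻ x in Ioc (t - T) t, κ (Ioi (t - x)) ∂μ) + μ (Ioi t) ≤ μ (Ioi (t - T)) := by
    have h1 : ∫⁻ x in Ioc (t - T) t, κ (Ioi (t - x)) ∂μ ≤ μ (Ioc (t - T) t) := by
      rw [← setLIntegral_one]
      exact setLIntegral_mono measurable_const fun x _ => prob_le_one
    calc (∫⁻ x in Ioc (t - T) t, κ (Ioi (t - x)) ∂μ) + μ (Ioi t)
        ≤ μ (Ioc (t - T) t) + μ (Ioi t) := add_le_add_left h1 _
      _ = μ (Ioi (t - T)) := by
          rw [← measure_union (Ioc_disjoint_Ioi le_rfl) measurableSet_Ioi,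
            Set.Ioc_union_Ioi_eq_Ioi (sub_le_self t hT)]
  calc (∫⁻ x in Icc 0 (t - T), κ (Ioi (t - x)) ∂μ) + (∫⁻ x in Ioc (t - T) t, κ (Ioi (t - x)) ∂μ)
        + μ (Ioi t) + C * μ (Ioi t)
      ≤ C * (∫⁻ x in Icc 0 (t - T) ∪ Ioc (t - T) t, ρ (Ioi (t - x)) ∂μ) + μ (Ioi (t - T))
        + C * μ (Ioi t) := by
        have := add_le_add hA hB
        calc _ = (∫⁻ x in Icc 0 (t - T), κ (Ioi (t - x)) ∂μ)
              + ((∫⁻ x in Ioc (t - T) t, κ (Ioi (t - x)) ∂μ) + μ (Ioi t)) + C * μ (Ioi t) := by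
              ring
          _ ≤ _ := add_le_add_left this _
    _ = C * ((∫⁻ x in Icc 0 (t - T) ∪ Ioc (t - T) t, ρ (Ioi (t - x)) ∂μ) + μ (Ioi t))
        + μ (Ioi (t - T)) := by ring

lemma my_tendsto_of_bounds {f : ℝ → ℝ} {L : ℝ}
    (hlow : ∀ ε > (0:ℝ), ∀ᶠ t in atTop, L - ε ≤ f t)
    (hup : ∀ ε > (0:ℝ), ∀ᶠ t in atTop, f t ≤ L + ε) : Tendsto f atTop (𝓝 L) := by
  refine tendsto_order.2 ⟨fun b hb => ?_, fun b hb => ?_⟩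
  · exact (hlow ((L - b) / 2) (by linarith)).mono fun t ht => by linarith
  · exact (hup ((b - L) / 2) (by linarith)).mono fun t ht => by linarith

lemma tail_toReal_tendsto_zero (μ : Measure ℝ) [IsProbabilityMeasure μ] :
    Tendsto (fun t => (μ (Ioi t)).toReal) atTop (𝓝 0) := by
  have h1 : Tendsto (fun t => μ (Iic t)) atTop (𝓝 1) := by
    simpa using tendsto_measure_Iic_atTop μ
  have h2 : Tendsto (fun t => (μ (Iic t)).toReal) atTop (𝓝 1) := by
    have := (ENNReal.tendsto_toReal (by norm_num : (1:ℝ≥0∞) ≠ ⊤)).comp h1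
    simpa [Function.comp_def] using this
  have h3 : ∀ t : ℝ, (μ (Ioi t)).toReal = 1 - (μ (Iic t)).toReal := by
    intro t
    have hu : μ (Iic t) + μ (Ioi t) = 1 := by
      rw [← measure_union (Iic_disjoint_Ioi le_rfl) measurableSet_Ioi, Iic_union_Ioi,
        measure_univ]
    have := congrArg ENNReal.toReal hu
    rw [ENNReal.toReal_add (measure_ne_top _ _) (measure_ne_top _ _)] at this
    simp at this
    linarith
  have : Tendsto (fun t => 1 - (μ (Iic t)).toReal) atTop (𝓝 (1 - 1)) :=
    tendsto_const_nhds.sub h2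
  simp only [sub_self] at this
  exact this.congr fun t => (h3 t).symm

lemma ioc_toReal (μ : Measure ℝ) [IsProbabilityMeasure μ] {s t : ℝ} (h : s ≤ t) :
    (μ (Ioc s t)).toReal = (μ (Ioi s)).toReal - (μ (Ioi t)).toReal := by
  have hu : μ (Ioc s t) + μ (Ioi t) = μ (Ioi s) := by
    rw [← measure_union (Ioc_disjoint_Ioi le_rfl) measurableSet_Ioi,
      Set.Ioc_union_Ioi_eq_Ioi h]
  have := congrArg ENNReal.toReal hu
  rw [ENNReal.toReal_add (measure_ne_top _ _) (measure_ne_top _ _)] at this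
  linarith

lemma icc0_toReal (μ : Measure ℝ) [IsProbabilityMeasure μ] (hμ : μ (Iio 0) = 0) {t : ℝ}
    (ht : 0 ≤ t) : (μ (Icc 0 t)).toReal = 1 - (μ (Ioi t)).toReal := by
  have := congrArg ENNReal.toReal (icc_add_ioi μ hμ ht)
  rw [ENNReal.toReal_add (measure_ne_top _ _) (measure_ne_top _ _)] at this
  simp at this
  linarith

lemma subexp_lower2 (μ : Measure ℝ) [IsProbabilityMeasure μ] (hμ : μ (Iio 0) = 0)
    {T t : ℝ} (hT : 0 ≤ T) (ht : T ≤ t) :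
    μ (Ioi t) + μ (Ioi t) * μ (Icc 0 T) + μ (Ioi (t - T)) * μ (Ioc T t)
      ≤ mconv μ μ (Ioi t) := by
  rw [mconv_tail_split μ μ hμ hμ (hT.trans ht)]
  have hsplit : Icc 0 t = Icc 0 T ∪ Ioc T t := (Set.Icc_union_Ioc_eq_Icc hT ht).symm
  rw [hsplit, lintegral_union measurableSet_Ioc
    ((Iic_disjoint_Ioc le_rfl).mono Icc_subset_Iic_self le_rfl)]
  have hA : μ (Ioi t) * μ (Icc 0 T) ≤ ∫⁻ x in Icc 0 T, μ (Ioi (t - x)) ∂μ := by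
    rw [← setLIntegral_const]
    refine setLIntegral_mono (tail_meas μ t) fun x hx => ?_
    exact measure_mono (Ioi_subset_Ioi (by linarith [hx.1]))
  have hB : μ (Ioi (t - T)) * μ (Ioc T t) ≤ ∫⁻ x in Ioc T t, μ (Ioi (t - x)) ∂μ := by
    rw [← setLIntegral_const]
    refine setLIntegral_mono (tail_meas μ t) fun x hx => ?_
    exact measure_mono (Ioi_subset_Ioi (by linarith [hx.1]))
  calc μ (Ioi t) + μ (Ioi t) * μ (Icc 0 T) + μ (Ioi (t - T)) * μ (Ioc T t)
      ≤ μ (Ioi t) + (∫⁻ x in Icc 0 T, μ (Ioi (t - x)) ∂μ)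
        + ∫⁻ x in Ioc T t, μ (Ioi (t - x)) ∂μ :=
        add_le_add (add_le_add_right hA _) hB
    _ = (∫⁻ x in Icc 0 T, μ (Ioi (t - x)) ∂μ) + (∫⁻ x in Ioc T t, μ (Ioi (t - x)) ∂μ)
        + μ (Ioi t) := by ring

lemma longtailed (ν : Measure ℝ) [IsProbabilityMeasure ν] (hsupp : ν (Iio 0) = 0)
    (hpos : ∀ t : ℝ, ν (Ioi t) ≠ 0)
    (hsubexp : Tendsto (fun t : ℝ =>
      ((mconv ν ν) (Ioi t)).toReal / (ν (Ioi t)).toReal) atTop (𝓝 2))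
    {T : ℝ} (hT : 0 ≤ T) :
    Tendsto (fun t => (ν (Ioi (t - T))).toReal / (ν (Ioi t)).toReal) atTop (𝓝 1) := by
  set a : ℝ → ℝ := fun t => (ν (Ioi t)).toReal with ha_def
  set q : ℝ → ℝ := fun t => ((mconv ν ν) (Ioi t)).toReal with hq_def
  have hapos : ∀ t, 0 < a t := fun t => ENNReal.toReal_pos (hpos t) (measure_ne_top _ _)
  have haanti : ∀ s t : ℝ, s ≤ t → a t ≤ a s := fun s t h =>
    ENNReal.toReal_mono (measure_ne_top _ _) (measure_mono (Ioi_subset_Ioi h))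
  have ha0 : Tendsto a atTop (𝓝 0) := tail_toReal_tendsto_zero ν
  have haT : 0 < a T := hapos T
  have hg : Tendsto (fun t => (q t / a t - 2 + a T) / (a T - a t)) atTop
      (𝓝 ((2 - 2 + a T) / (a T - 0))) :=
    Tendsto.div (((hsubexp.sub tendsto_const_nhds).add tendsto_const_nhds))
      (tendsto_const_nhds.sub ha0) (by rw [sub_zero]; exact haT.ne')
  have hlim : (2 - 2 + a T) / (a T - 0) = 1 := by
    rw [sub_zero]; field_simp; ring
  rw [hlim] at hg
  refine tendsto_of_tendsto_of_tendsto_of_le_of_le' tendsto_const_nhds hg ?_ ?_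
  · exact Eventually.of_forall fun t =>
      (one_le_div (hapos t)).2 (haanti _ _ (by linarith))
  · filter_upwards [eventually_ge_atTop T, ha0.eventually_lt_const haT] with t ht hlt
    have key := subexp_lower2 ν hsupp hT ht
    have hr := ENNReal.toReal_mono (measure_ne_top _ _) key
    rw [ENNReal.toReal_add, ENNReal.toReal_add, ENNReal.toReal_mul, ENNReal.toReal_mul,
      icc0_toReal ν hsupp hT, ioc_toReal ν ht] at hr
    rotate_left
    · finiteness
    · finiteness
    · finiteness
    · finiteness
    rw [div_le_div_iff₀ (hapos t) (by linarith : 0 < a T - a t)]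
    have e1 : q t / a t * a t = q t := div_mul_cancel₀ _ (hapos t).ne'
    have e2 : (q t / a t - 2 + a T) * a t = q t - 2 * a t + a T * a t := by
      rw [add_mul, sub_mul, e1]
    rw [e2]
    have hr' : a t + a t * (1 - a T) + a (t - T) * (a T - a t) ≤ q t := hr
    nlinarith [hr']

/-- If `F` is subexponential and `F̄_i(t)/F̄(t) → c_i` (`i = 1,2`), then
`(F_1 * F_2)-bar (t)/F̄(t) → c_1 + c_2`. -/
theorem stmt15 (ν ν1 ν2 : Measure ℝ) [IsProbabilityMeasure ν]
    [IsProbabilityMeasure ν1] [IsProbabilityMeasure ν2]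
    (hsupp : ν (Set.Iio (0:ℝ)) = 0) (hsupp1 : ν1 (Set.Iio (0:ℝ)) = 0)
    (hsupp2 : ν2 (Set.Iio (0:ℝ)) = 0)
    (hsubexp : Tendsto (fun t : ℝ =>
        ((mconv ν ν) (Set.Ioi t)).toReal / (ν (Set.Ioi t)).toReal) atTop (nhds 2))
    (c1 c2 : ℝ) (hc1 : 0 ≤ c1) (hc2 : 0 ≤ c2)
    (h1 : Tendsto (fun t : ℝ =>
        (ν1 (Set.Ioi t)).toReal / (ν (Set.Ioi t)).toReal) atTop (nhds c1))
    (h2 : Tendsto (fun t : ℝ =>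
        (ν2 (Set.Ioi t)).toReal / (ν (Set.Ioi t)).toReal) atTop (nhds c2)) :
    Tendsto (fun t : ℝ =>
        ((mconv ν1 ν2) (Set.Ioi t)).toReal / (ν (Set.Ioi t)).toReal)
      atTop (nhds (c1 + c2)) := by
  -- positivity of the tail of ν
  have hpos : ∀ t : ℝ, ν (Ioi t) ≠ 0 := by
    intro t0 h0
    have hz : (fun t : ℝ => ((mconv ν ν) (Ioi t)).toReal / (ν (Ioi t)).toReal)
        =ᶠ[atTop] (fun _ => 0) := by
      filter_upwards [eventually_ge_atTop t0] with t ht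
      have hzero : ν (Ioi t) = 0 :=
        le_antisymm (h0 ▸ measure_mono (Ioi_subset_Ioi ht)) zero_le
      rw [hzero]; simp
    have h0' : Tendsto (fun t : ℝ => ((mconv ν ν) (Ioi t)).toReal / (ν (Ioi t)).toReal)
        atTop (𝓝 0) := (tendsto_congr' hz).2 tendsto_const_nhds
    exact absurd (tendsto_nhds_unique h0' hsubexp) (by norm_num)
  have hapos : ∀ t : ℝ, 0 < (ν (Ioi t)).toReal := fun t =>
    ENNReal.toReal_pos (hpos t) (measure_ne_top _ _)
  have ha0 : Tendsto (fun t => (ν (Ioi t)).toReal) atTop (𝓝 0) := tail_toReal_tendsto_zero ν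
  have ha10 : Tendsto (fun t => (ν1 (Ioi t)).toReal) atTop (𝓝 0) := tail_toReal_tendsto_zero ν1
  have hlt : ∀ T : ℝ, 0 ≤ T →
      Tendsto (fun t => (ν (Ioi (t - T))).toReal / (ν (Ioi t)).toReal) atTop (𝓝 1) :=
    fun T hT => longtailed ν hsupp hpos hsubexp hT
  -- shifted ratio for ν1
  have hshift1 : ∀ T : ℝ, 0 ≤ T →
      Tendsto (fun t => (ν1 (Ioi (t - T))).toReal / (ν (Ioi t)).toReal) atTop (𝓝 c1) := by
    intro T hT
    have hsub : Tendsto (fun t : ℝ => t - T) atTop atTop :=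
      tendsto_atTop_add_const_right atTop (-T) tendsto_id
    have hcomp : Tendsto (fun t : ℝ =>
        (ν1 (Ioi (t - T))).toReal / (ν (Ioi (t - T))).toReal) atTop (𝓝 c1) := h1.comp hsub
    have hmul := hcomp.mul (hlt T hT)
    rw [mul_one] at hmul
    refine hmul.congr fun t => ?_
    have h1' : (ν (Ioi (t - T))).toReal ≠ 0 := (hapos (t - T)).ne'
    field_simp
  -- comparison builder
  have hcompmk : ∀ (μ' : Measure ℝ), IsFiniteMeasure μ' → ∀ (c ε : ℝ), 0 ≤ c → 0 < ε →
      Tendsto (fun t => (μ' (Ioi t)).toReal / (ν (Ioi t)).toReal) atTop (𝓝 c) →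
      ∃ T, 0 ≤ T ∧ ∀ s, T ≤ s → μ' (Ioi s) ≤ ENNReal.ofReal (c + ε) * ν (Ioi s) := by
    intro μ' hfin c ε hc hε htend
    obtain ⟨T0, hT0⟩ := eventually_atTop.1 (htend.eventually_lt_const (by linarith : c < c + ε))
    refine ⟨max T0 0, le_max_right _ _, fun s hs => ?_⟩
    have hb := hT0 s (le_trans (le_max_left T0 0) hs)
    rw [div_lt_iff₀ (hapos s)] at hb
    calc μ' (Ioi s) = ENNReal.ofReal ((μ' (Ioi s)).toReal) :=
          (ENNReal.ofReal_toReal (measure_ne_top _ _)).symm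
      _ ≤ ENNReal.ofReal ((c + ε) * (ν (Ioi s)).toReal) := ENNReal.ofReal_le_ofReal hb.le
      _ = ENNReal.ofReal (c + ε) * ν (Ioi s) := by
          rw [ENNReal.ofReal_mul (by linarith), ENNReal.ofReal_toReal (measure_ne_top _ _)]
  -- Stage 2 : mconv ν ν1 ratio tends to 1 + c1
  have hr : Tendsto (fun t => ((mconv ν ν1) (Ioi t)).toReal / (ν (Ioi t)).toReal)
      atTop (𝓝 (1 + c1)) := by
    refine my_tendsto_of_bounds (fun ε hε => ?_) (fun ε hε => ?_)
    · -- lower bound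
      have hlowt : Tendsto (fun t => 1 + (ν1 (Ioi t)).toReal / (ν (Ioi t)).toReal *
          (1 - (ν (Ioi t)).toReal)) atTop (𝓝 (1 + c1 * (1 - 0))) :=
        tendsto_const_nhds.add (h1.mul (tendsto_const_nhds.sub ha0))
      rw [show (1 : ℝ) + c1 * (1 - 0) = 1 + c1 by ring] at hlowt
      filter_upwards [eventually_ge_atTop (0:ℝ),
        hlowt.eventually_const_le (by linarith : 1 + c1 - ε < 1 + c1)] with t ht hev
      have key := mconv_lower ν ν1 hsupp hsupp1 ht
      have hrr := ENNReal.toReal_mono (measure_ne_top _ _) key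
      rw [ENNReal.toReal_add (measure_ne_top _ _) (ENNReal.mul_ne_top (measure_ne_top _ _) (measure_ne_top _ _)), ENNReal.toReal_mul,
        icc0_toReal ν hsupp ht] at hrr
      have hstep : 1 + (ν1 (Ioi t)).toReal / (ν (Ioi t)).toReal * (1 - (ν (Ioi t)).toReal)
          ≤ ((mconv ν ν1) (Ioi t)).toReal / (ν (Ioi t)).toReal := by
        rw [le_div_iff₀ (hapos t)]
        have e2 : (1 + (ν1 (Ioi t)).toReal / (ν (Ioi t)).toReal * (1 - (ν (Ioi t)).toReal))
            * (ν (Ioi t)).toReal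
            = (ν (Ioi t)).toReal + (ν1 (Ioi t)).toReal * (1 - (ν (Ioi t)).toReal) := by
          have hne : (ν (Ioi t)).toReal ≠ 0 := (hapos t).ne'
          field_simp
          try ring
        rw [e2]; linarith
      linarith
    · -- upper bound
      obtain ⟨T, hT0, hcomp⟩ := hcompmk ν1 inferInstance c1 (ε/4) hc1 (by linarith) h1
      have hupt : Tendsto (fun t => (c1 + ε/4) * (((mconv ν ν) (Ioi t)).toReal /
          (ν (Ioi t)).toReal) - (c1 + ε/4) + (ν (Ioi (t - T))).toReal / (ν (Ioi t)).toReal)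
          atTop (𝓝 ((c1 + ε/4) * 2 - (c1 + ε/4) + 1)) :=
        ((tendsto_const_nhds.mul hsubexp).sub tendsto_const_nhds).add (hlt T hT0)
      filter_upwards [eventually_ge_atTop T,
        hupt.eventually_le_const (by linarith : (c1 + ε/4) * 2 - (c1 + ε/4) + 1 < 1 + c1 + ε)]
        with t ht hev
      have key := mconv_upper ν ν1 ν hsupp hsupp1 hsupp (ENNReal.ofReal (c1 + ε/4)) hT0 ht hcomp
      have hrr := ENNReal.toReal_mono (ENNReal.add_ne_top.2 ⟨ENNReal.mul_ne_top ENNReal.ofReal_ne_top (measure_ne_top _ _), measure_ne_top _ _⟩) key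
      rw [ENNReal.toReal_add (measure_ne_top _ _) (ENNReal.mul_ne_top ENNReal.ofReal_ne_top (measure_ne_top _ _)),
        ENNReal.toReal_add (ENNReal.mul_ne_top ENNReal.ofReal_ne_top (measure_ne_top _ _)) (measure_ne_top _ _),
        ENNReal.toReal_mul, ENNReal.toReal_mul,
        ENNReal.toReal_ofReal (by linarith : (0:ℝ) ≤ c1 + ε/4)] at hrr
      have hstep : ((mconv ν ν1) (Ioi t)).toReal / (ν (Ioi t)).toReal
          ≤ (c1 + ε/4) * (((mconv ν ν) (Ioi t)).toReal / (ν (Ioi t)).toReal)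
            - (c1 + ε/4) + (ν (Ioi (t - T))).toReal / (ν (Ioi t)).toReal := by
        rw [div_le_iff₀ (hapos t)]
        have e2 : ((c1 + ε/4) * (((mconv ν ν) (Ioi t)).toReal / (ν (Ioi t)).toReal)
            - (c1 + ε/4) + (ν (Ioi (t - T))).toReal / (ν (Ioi t)).toReal) * (ν (Ioi t)).toReal
            = (c1 + ε/4) * ((mconv ν ν) (Ioi t)).toReal - (c1 + ε/4) * (ν (Ioi t)).toReal
              + (ν (Ioi (t - T))).toReal := by
          have hne : (ν (Ioi t)).toReal ≠ 0 := (hapos t).ne'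
          field_simp
          try ring
        rw [e2]; linarith
      linarith
  -- restate via commutativity
  have hr' : Tendsto (fun t => ((mconv ν1 ν) (Ioi t)).toReal / (ν (Ioi t)).toReal)
      atTop (𝓝 (1 + c1)) := by
    refine hr.congr fun t => ?_
    rw [mconv_comm ν ν1]
  -- Stage 3
  refine my_tendsto_of_bounds (fun ε hε => ?_) (fun ε hε => ?_)
  · -- lower bound
    have hlowt : Tendsto (fun t => (ν1 (Ioi t)).toReal / (ν (Ioi t)).toReal +
        (ν2 (Ioi t)).toReal / (ν (Ioi t)).toReal * (1 - (ν1 (Ioi t)).toReal)) atTop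
        (𝓝 (c1 + c2 * (1 - 0))) :=
      h1.add (h2.mul (tendsto_const_nhds.sub ha10))
    rw [show c1 + c2 * (1 - 0) = c1 + c2 by ring] at hlowt
    filter_upwards [eventually_ge_atTop (0:ℝ),
      hlowt.eventually_const_le (by linarith : c1 + c2 - ε < c1 + c2)] with t ht hev
    have key := mconv_lower ν1 ν2 hsupp1 hsupp2 ht
    have hrr := ENNReal.toReal_mono (measure_ne_top _ _) key
    rw [ENNReal.toReal_add (measure_ne_top _ _) (ENNReal.mul_ne_top (measure_ne_top _ _) (measure_ne_top _ _)), ENNReal.toReal_mul,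
      icc0_toReal ν1 hsupp1 ht] at hrr
    have hstep : (ν1 (Ioi t)).toReal / (ν (Ioi t)).toReal +
        (ν2 (Ioi t)).toReal / (ν (Ioi t)).toReal * (1 - (ν1 (Ioi t)).toReal)
        ≤ ((mconv ν1 ν2) (Ioi t)).toReal / (ν (Ioi t)).toReal := by
      rw [le_div_iff₀ (hapos t)]
      have e2 : ((ν1 (Ioi t)).toReal / (ν (Ioi t)).toReal +
          (ν2 (Ioi t)).toReal / (ν (Ioi t)).toReal * (1 - (ν1 (Ioi t)).toReal))
          * (ν (Ioi t)).toReal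
          = (ν1 (Ioi t)).toReal + (ν2 (Ioi t)).toReal * (1 - (ν1 (Ioi t)).toReal) := by
        have hne : (ν (Ioi t)).toReal ≠ 0 := (hapos t).ne'
        field_simp
        try ring
      rw [e2]; linarith
    linarith
  · -- upper bound
    obtain ⟨T, hT0, hcomp⟩ := hcompmk ν2 inferInstance c2 (ε/4) hc2 (by linarith) h2
    have hupt : Tendsto (fun t => (c2 + ε/4) * (((mconv ν1 ν) (Ioi t)).toReal /
        (ν (Ioi t)).toReal) - (c2 + ε/4) * ((ν1 (Ioi t)).toReal / (ν (Ioi t)).toReal)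
        + (ν1 (Ioi (t - T))).toReal / (ν (Ioi t)).toReal)
        atTop (𝓝 ((c2 + ε/4) * (1 + c1) - (c2 + ε/4) * c1 + c1)) :=
      ((tendsto_const_nhds.mul hr').sub (tendsto_const_nhds.mul h1)).add (hshift1 T hT0)
    rw [show (c2 + ε/4) * (1 + c1) - (c2 + ε/4) * c1 + c1 = c1 + c2 + ε/4 from by ring] at hupt
    filter_upwards [eventually_ge_atTop T,
      hupt.eventually_le_const (by linarith : c1 + c2 + ε/4 < c1 + c2 + ε)]
      with t ht hev
    have key := mconv_upper ν1 ν2 ν hsupp1 hsupp2 hsupp (ENNReal.ofReal (c2 + ε/4)) hT0 ht hcomp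
    have hrr := ENNReal.toReal_mono (ENNReal.add_ne_top.2 ⟨ENNReal.mul_ne_top ENNReal.ofReal_ne_top (measure_ne_top _ _), measure_ne_top _ _⟩) key
    rw [ENNReal.toReal_add (measure_ne_top _ _) (ENNReal.mul_ne_top ENNReal.ofReal_ne_top (measure_ne_top _ _)),
      ENNReal.toReal_add (ENNReal.mul_ne_top ENNReal.ofReal_ne_top (measure_ne_top _ _)) (measure_ne_top _ _),
      ENNReal.toReal_mul, ENNReal.toReal_mul,
      ENNReal.toReal_ofReal (by linarith : (0:ℝ) ≤ c2 + ε/4)] at hrr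
    have hstep : ((mconv ν1 ν2) (Ioi t)).toReal / (ν (Ioi t)).toReal
        ≤ (c2 + ε/4) * (((mconv ν1 ν) (Ioi t)).toReal / (ν (Ioi t)).toReal)
          - (c2 + ε/4) * ((ν1 (Ioi t)).toReal / (ν (Ioi t)).toReal)
          + (ν1 (Ioi (t - T))).toReal / (ν (Ioi t)).toReal := by
      rw [div_le_iff₀ (hapos t)]
      have e2 : ((c2 + ε/4) * (((mconv ν1 ν) (Ioi t)).toReal / (ν (Ioi t)).toReal)
          - (c2 + ε/4) * ((ν1 (Ioi t)).toReal / (ν (Ioi t)).toReal)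
          + (ν1 (Ioi (t - T))).toReal / (ν (Ioi t)).toReal) * (ν (Ioi t)).toReal
          = (c2 + ε/4) * ((mconv ν1 ν) (Ioi t)).toReal
            - (c2 + ε/4) * (ν1 (Ioi t)).toReal + (ν1 (Ioi (t - T))).toReal := by
        have hne : (ν (Ioi t)).toReal ≠ 0 := (hapos t).ne'
        field_simp
        try ring
      rw [e2]; linarith
    linarith
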